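/- Let (𝔤, [·,·], J) be a complex A-Lie algebra of derivation type with ∂̄ defined by (∂̄W)(V) = ½([V,W] + J[JV,W]) + ¼ N(V,W). Then ∂̄ commutes with J: (∂̄(JW))(V) = J((∂̄W)(V)) for all V, W ∈ 𝔤. -/
import Mathlib


/-- A complex A-Lie algebra of derivation type: A is a commutative ℝ-algebra with unit,
g an A-module of derivations of A with a Lie bracket satisfying the Leibniz rule
[aV,W] = a[V,W] − (Wa)V, and J an A-linear complex structure on g. -/
structure CplxDerLie (A : Type*) [CommRing A] [Algebra ℝ A]
    (g : Type*) [AddCommGroup g] [Module ℝ g] [Module A g] [IsScalarTower ℝ A g] where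
  bracket : g → g → g
  act : g → A → A
  bracket_add_left : ∀ u v w, bracket (u + v) w = bracket u w + bracket v w
  bracket_skew : ∀ v w, bracket v w = - bracket w v
  leibniz : ∀ (a : A) (v w : g), bracket (a • v) w = a • bracket v w - (act w a) • v
  J : g →ₗ[A] g
  J_sq : ∀ v, J (J v) = -v

variable {A : Type*} [CommRing A] [Algebra ℝ A]
  {g : Type*} [AddCommGroup g] [Module ℝ g] [Module A g] [IsScalarTower ℝ A g]

/-- The Nijenhuis tensor N(V,W) = [JV,JW] − [V,W] − J[JV,W] − J[V,JW]. -/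
def nijenhuis (D : CplxDerLie A g) (v w : g) : g :=
  D.bracket (D.J v) (D.J w) - D.bracket v w
    - D.J (D.bracket (D.J v) w) - D.J (D.bracket v (D.J w))

/-- The operator (∂̄W)(V) = ½([V,W] + J[JV,W]) + ¼ N(V,W). -/
noncomputable def dbarOp (D : CplxDerLie A g) (w v : g) : g :=
  (2 : ℝ)⁻¹ • (D.bracket v w + D.J (D.bracket (D.J v) w))
    + (4 : ℝ)⁻¹ • nijenhuis D v w

lemma bracket_zero_left (D : CplxDerLie A g) (x : g) : D.bracket 0 x = 0 := by
  have h := D.bracket_add_left 0 0 x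
  rw [add_zero] at h
  exact add_eq_left.mp h.symm

lemma bracket_neg_left (D : CplxDerLie A g) (u x : g) :
    D.bracket (-u) x = -D.bracket u x := by
  have h := D.bracket_add_left u (-u) x
  rw [add_neg_cancel, bracket_zero_left] at h
  exact eq_neg_of_add_eq_zero_right h.symm

lemma bracket_neg_right (D : CplxDerLie A g) (x w : g) :
    D.bracket x (-w) = -D.bracket x w := by
  rw [D.bracket_skew, bracket_neg_left, neg_neg, D.bracket_skew w x]

/-- ∂̄ commutes with J: (∂̄(JW))(V) = J((∂̄W)(V)). -/
theorem stmt_5 (D : CplxDerLie A g) (v w : g) :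
    dbarOp D (D.J w) v = D.J (dbarOp D w v) := by
  simp only [dbarOp, nijenhuis, D.J_sq, bracket_neg_right, map_add, map_sub, map_neg,
    LinearMap.map_smul_of_tower]
  module
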